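/- The subalgebra R has finite codimension in K[t, ξ]: the quotient K[t, ξ]/R of K-vector spaces (K[t,ξ] modulo the underlying K-submodule of R) is finite-dimensional over K. In particular, setting ℓ := max over w ∈ ℕ\N of 2·#Ω(−w) (and ℓ := 0 if N = ℕ), every monomial t^u ξ^v with u + v ≥ ℓ belongs to R. -/

import Mathlib

/-!
Setting: `K` an algebraically closed field of characteristic 0, `N` an additive
submonoid of `ℕ` with finite complement, `Ω(w) = {b ∈ N : b + w ∉ N}` (computed in `ℤ`),
and `R ⊆ K[t,ξ]` the `K`-subalgebra generated by `t·ξ` and the monomials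
`t^{#Ω(w)}·ξ^{#Ω(−w)}`, `w ∈ ℤ`. By Saito–Traves, `R = gr D(K[N];K)`.
Here `t = X 0` and `ξ = X 1` in `MvPolynomial (Fin 2) K`.
-/

/-- `Ω(w) = {b ∈ N : b + w ∉ N}`, the sum `b + w` computed in `ℤ`. -/
def Om (N : AddSubmonoid ℕ) (w : ℤ) : Set ℕ :=
  {b : ℕ | b ∈ N ∧ ∀ c ∈ N, (c : ℤ) ≠ (b : ℤ) + w}

/-- The associated graded ring `gr D(K[N];K)` in its Saito–Traves description: the
`K`-subalgebra of `K[t,ξ]` generated by `t·ξ` and `t^{#Ω(w)}·ξ^{#Ω(−w)}`, `w ∈ ℤ`. -/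
noncomputable def grR (K : Type) [Field K] (N : AddSubmonoid ℕ) :
    Subalgebra K (MvPolynomial (Fin 2) K) :=
  Algebra.adjoin K
    ({MvPolynomial.X 0 * MvPolynomial.X 1} ∪
      {p | ∃ w : ℤ,
        p = MvPolynomial.X 0 ^ (Om N w).ncard * MvPolynomial.X 1 ^ (Om N (-w)).ncard})

section Comb
open Finset
open scoped Classical
variable {N : AddSubmonoid ℕ} {B : ℕ} (hB : ∀ m, B ≤ m → m ∈ N)

lemma om_mem_iff {w : ℤ} {b : ℕ} :
    b ∈ Om N w ↔ b ∈ N ∧ ∀ c ∈ N, (c : ℤ) ≠ (b : ℤ) + w := Iff.rfl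

include hB

lemma om_finite (w : ℤ) : (Om N w).Finite := by
  apply Set.Finite.subset (Set.finite_Iio (B + w.natAbs))
  intro b hb
  by_contra hlt
  simp only [Set.mem_Iio, not_lt] at hlt
  have hw := Int.natAbs_eq w
  have hbw : (0:ℤ) ≤ (b:ℤ) + w := by rcases hw with h|h <;> omega
  have hc : ((b:ℤ) + w).toNat ∈ N := by
    apply hB; rcases hw with h|h <;> omega
  exact hb.2 _ hc (by omega)

lemma om_eq_finset (d : ℕ) :
    Om N (-(d:ℤ)) =
      ↑((Finset.range (B + d)).filter
        (fun b => b ∈ N ∧ ¬ (d ≤ b ∧ b - d ∈ N))) := by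
  ext b
  simp only [coe_filter, Finset.mem_range, om_mem_iff, Set.mem_setOf_eq]
  constructor
  · rintro ⟨hbN, h⟩
    have h1 : ¬ (d ≤ b ∧ b - d ∈ N) := by
      rintro ⟨hdb, hsub⟩
      exact h _ hsub (by omega)
    refine ⟨?_, hbN, h1⟩
    by_contra hle
    exact h1 ⟨by omega, hB _ (by omega)⟩
  · rintro ⟨hblt, hbN, h1⟩
    refine ⟨hbN, fun c hc hceq => h1 ⟨by omega, ?_⟩⟩
    have : c = b - d := by omega
    rwa [← this]

lemma om_pos_eq_finset (d : ℕ) :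
    Om N (d:ℤ) =
      ↑((Finset.range (B + d)).filter
        (fun b => b ∈ N ∧ b + d ∉ N)) := by
  ext b
  simp only [coe_filter, Finset.mem_range, om_mem_iff, Set.mem_setOf_eq]
  constructor
  · rintro ⟨hbN, h⟩
    have h1 : b + d ∉ N := fun hmem => h _ hmem (by push_cast; ring)
    have : b < B := by
      by_contra hle
      exact h1 (hB _ (by omega))
    exact ⟨by omega, hbN, h1⟩
  · rintro ⟨-, hbN, h1⟩
    refine ⟨hbN, fun c hc hceq => ?_⟩
    have : c = b + d := by omega
    exact h1 (this ▸ hc)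

lemma om_card_identity (d : ℕ) :
    (Om N (-(d:ℤ))).ncard = (Om N (d:ℤ)).ncard + d := by
  set M := B + d with hM
  set A : ℕ → Prop := fun b => b ∈ N with hA
  set P : ℕ → Prop := fun b => d ≤ b ∧ b - d ∈ N with hP
  have hneg : (Om N (-(d:ℤ))).ncard =
      ((Finset.range M).filter (fun b => A b ∧ ¬ P b)).card := by
    rw [om_eq_finset hB d, Set.ncard_coe_finset]
  have hpos : (Om N (d:ℤ)).ncard =
      ((Finset.range M).filter (fun b => ¬ A b ∧ P b)).card := by
    rw [om_pos_eq_finset hB d, Set.ncard_coe_finset]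
    apply Finset.card_bij (fun b _ => b + d)
    · intro b hb
      simp only [Finset.mem_filter, Finset.mem_range] at hb ⊢
      obtain ⟨hblt, hbN, hnd⟩ := hb
      have : b + d < B := by
        by_contra hle
        exact hnd (hB _ (by omega))
      exact ⟨by omega, hnd, by omega, by simpa using hbN⟩
    · intro a ha b hb hab; omega
    · intro b hb
      simp only [Finset.mem_filter, Finset.mem_range] at hb
      obtain ⟨hblt, hbN, hdb, hsub⟩ := hb
      have hbB : b < B := by
        by_contra hle
        exact hbN (hB _ (by omega))
      refine ⟨b - d, ?_, by omega⟩
      simp only [Finset.mem_filter, Finset.mem_range]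
      exact ⟨by omega, hsub, by rwa [Nat.sub_add_cancel hdb]⟩
  -- splitting identities
  have e1 : ((Finset.range M).filter (fun b => A b ∧ ¬ P b)).card
      + ((Finset.range M).filter (fun b => A b ∧ P b)).card
      = ((Finset.range M).filter A).card := by
    have key := Finset.card_filter_add_card_filter_not
      (s := (Finset.range M).filter A) (p := P)
    rw [Finset.filter_filter, Finset.filter_filter] at key
    omega
  have e2 : ((Finset.range M).filter (fun b => ¬ A b ∧ P b)).card
      + ((Finset.range M).filter (fun b => A b ∧ P b)).card
      = ((Finset.range M).filter P).card := by
    have key := Finset.card_filter_add_card_filter_not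
      (s := (Finset.range M).filter P) (p := A)
    rw [Finset.filter_filter, Finset.filter_filter] at key
    have c1 : ((Finset.range M).filter (fun b => ¬ A b ∧ P b)).card
        = ((Finset.range M).filter (fun a => P a ∧ ¬ A a)).card := by
      congr 1
      apply Finset.filter_congr
      intro x hx
      tauto
    have c2 : ((Finset.range M).filter (fun b => A b ∧ P b)).card
        = ((Finset.range M).filter (fun a => P a ∧ A a)).card := by
      congr 1
      apply Finset.filter_congr
      intro x hx
      tauto
    omega
  have e3 : ((Finset.range M).filter A).card
      = ((Finset.range M).filter P).card + d := by
    -- filter P over range M bijects (via ·-d) with filter A over range B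
    have hPcard : ((Finset.range M).filter P).card
        = ((Finset.range B).filter A).card := by
      apply Finset.card_bij (fun b _ => b - d)
      · intro b hb
        simp only [Finset.mem_filter, Finset.mem_range, hA, hP] at hb ⊢
        exact ⟨by omega, hb.2.2⟩
      · intro a ha b hb hab
        simp only [Finset.mem_filter, hP] at ha hb
        omega
      · intro b hb
        simp only [Finset.mem_filter, Finset.mem_range, hA] at hb
        refine ⟨b + d, ?_, by omega⟩
        simp only [Finset.mem_filter, Finset.mem_range, hP]
        exact ⟨by omega, by omega, by simpa using hb.2⟩
    have hsplit : ((Finset.range M).filter A).card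
        = ((Finset.range B).filter A).card + d := by
      have hun : Finset.range M = Finset.range B ∪ Finset.Ico B M := by
        rw [Finset.range_eq_Ico, Finset.range_eq_Ico]
        exact (Finset.Ico_union_Ico_eq_Ico (a := 0) (b := B) (c := M) (by omega) (by omega)).symm
      rw [hun, Finset.filter_union, Finset.card_union_of_disjoint]
      · have : (Finset.Ico B M).filter A = Finset.Ico B M := by
          apply Finset.filter_true_of_mem
          intro x hx
          simp only [Finset.mem_Ico] at hx
          exact hB _ hx.1
        rw [this, Nat.card_Ico]
        omega
      · exact Finset.disjoint_filter_filter
          (by rw [Finset.range_eq_Ico]; exact Finset.Ico_disjoint_Ico_consecutive 0 B M)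
    omega
  omega
end Comb

section Alg
open MvPolynomial
variable {K : Type} [Field K] {N : AddSubmonoid ℕ} {B : ℕ}

lemma om_empty {d : ℕ} (hd : d ∈ N) : Om N (d:ℤ) = ∅ := by
  ext b
  simp only [Om, Set.mem_setOf_eq, Set.mem_empty_iff_false, iff_false, not_and]
  intro hbN h
  exact h (b + d) (AddSubmonoid.add_mem N hbN hd) (by push_cast; ring)

variable (hB : ∀ m, B ≤ m → m ∈ N)
include hB

lemma xi_pow_mem {d : ℕ} (hd : d ∈ N) : X 1 ^ d ∈ grR K N := by
  have h0 : (Om N (d:ℤ)).ncard = 0 := by rw [om_empty hd]; simp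
  have h1 : (Om N (-(d:ℤ))).ncard = d := by rw [om_card_identity hB, h0]; omega
  have : (X 1 : MvPolynomial (Fin 2) K) ^ d
      = X 0 ^ (Om N (d:ℤ)).ncard * X 1 ^ (Om N (-(d:ℤ))).ncard := by
    rw [h0, h1, pow_zero, one_mul]
  rw [this]
  exact Algebra.subset_adjoin (Or.inr ⟨(d:ℤ), rfl⟩)

lemma t_pow_mem {d : ℕ} (hd : d ∈ N) : X 0 ^ d ∈ grR K N := by
  have h0 : (Om N (d:ℤ)).ncard = 0 := by rw [om_empty hd]; simp
  have h1 : (Om N (-(d:ℤ))).ncard = d := by rw [om_card_identity hB, h0]; omega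
  have : (X 0 : MvPolynomial (Fin 2) K) ^ d
      = X 0 ^ (Om N (-(d:ℤ))).ncard * X 1 ^ (Om N (-(-(d:ℤ)))).ncard := by
    rw [neg_neg, h0, h1, pow_zero, mul_one]
  rw [this]
  exact Algebra.subset_adjoin (Or.inr ⟨-(d:ℤ), rfl⟩)

lemma gap_gen_mem (d : ℕ) :
    (X 0 : MvPolynomial (Fin 2) K) ^ (Om N (d:ℤ)).ncard
      * X 1 ^ ((Om N (d:ℤ)).ncard + d) ∈ grR K N := by
  have h1 : (Om N (-(d:ℤ))).ncard = (Om N (d:ℤ)).ncard + d := om_card_identity hB d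
  rw [← h1]
  exact Algebra.subset_adjoin (Or.inr ⟨(d:ℤ), rfl⟩)

lemma gap_gen_mem' (d : ℕ) :
    (X 0 : MvPolynomial (Fin 2) K) ^ ((Om N (d:ℤ)).ncard + d)
      * X 1 ^ (Om N (d:ℤ)).ncard ∈ grR K N := by
  have h1 : (Om N (-(d:ℤ))).ncard = (Om N (d:ℤ)).ncard + d := om_card_identity hB d
  have : (X 0 : MvPolynomial (Fin 2) K) ^ ((Om N (d:ℤ)).ncard + d)
      * X 1 ^ (Om N (d:ℤ)).ncard
      = X 0 ^ (Om N (-(d:ℤ))).ncard * X 1 ^ (Om N (-(-(d:ℤ)))).ncard := by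
    rw [neg_neg, h1]
  rw [this]
  exact Algebra.subset_adjoin (Or.inr ⟨-(d:ℤ), rfl⟩)

omit hB

lemma sSet_finite (hfin : {m : ℕ | m ∉ N}.Finite) :
    {m : ℕ | ∃ w : ℕ, w ∉ N ∧ m = 2 * (Om N (-(w : ℤ))).ncard}.Finite := by
  have : {m : ℕ | ∃ w : ℕ, w ∉ N ∧ m = 2 * (Om N (-(w : ℤ))).ncard}
      ⊆ (fun w : ℕ => 2 * (Om N (-(w : ℤ))).ncard) '' {m : ℕ | m ∉ N} := by
    rintro m ⟨w, hw, rfl⟩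
    exact ⟨w, hw, rfl⟩
  exact Set.Finite.subset (hfin.image _) this

include hB

lemma monomial_mem (hfin : {m : ℕ | m ∉ N}.Finite) (u v : ℕ)
    (huv : sSup {m : ℕ | ∃ w : ℕ, w ∉ N ∧ m = 2 * (Om N (-(w : ℤ))).ncard} ≤ u + v) :
    (X 0 : MvPolynomial (Fin 2) K) ^ u * X 1 ^ v ∈ grR K N := by
  have htxi : (X 0 : MvPolynomial (Fin 2) K) * X 1 ∈ grR K N :=
    Algebra.subset_adjoin (Or.inl rfl)
  have hbdd := (sSet_finite (N := N) hfin).bddAbove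
  rcases le_total u v with h | h
  · obtain ⟨d, hd⟩ : ∃ d, d = v - u := ⟨v - u, rfl⟩
    by_cases hdN : d ∈ N
    · have heq : (X 0 : MvPolynomial (Fin 2) K) ^ u * X 1 ^ v
          = (X 0 * X 1) ^ u * X 1 ^ d := by
        have hv : v = u + d := by omega
        rw [hv, mul_pow, pow_add]; ring
      rw [heq]
      exact mul_mem (pow_mem htxi u) (xi_pow_mem hB hdN)
    · obtain ⟨a, ha⟩ : ∃ a, a = (Om N (d:ℤ)).ncard := ⟨_, rfl⟩
      have hmem : 2 * ((Om N (-(d:ℤ))).ncard)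
          ∈ {m : ℕ | ∃ w : ℕ, w ∉ N ∧ m = 2 * (Om N (-(w : ℤ))).ncard} := ⟨d, hdN, rfl⟩
      have hle : 2 * (a + d) ≤ u + v := by
        have := le_trans (le_csSup hbdd hmem) huv
        rwa [om_card_identity hB d, ← ha] at this
      have hua : a ≤ u := by omega
      obtain ⟨k, rfl⟩ : ∃ k, u = k + a := ⟨u - a, by omega⟩
      have hv' : v = k + (a + d) := by omega
      have heq : (X 0 : MvPolynomial (Fin 2) K) ^ (k + a) * X 1 ^ v
          = (X 0 * X 1) ^ k * (X 0 ^ a * X 1 ^ (a + d)) := by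
        rw [hv']; ring
      rw [heq]
      exact mul_mem (pow_mem htxi k) (ha ▸ gap_gen_mem hB d)
  · obtain ⟨d, hd⟩ : ∃ d, d = u - v := ⟨u - v, rfl⟩
    by_cases hdN : d ∈ N
    · have heq : (X 0 : MvPolynomial (Fin 2) K) ^ u * X 1 ^ v
          = (X 0 * X 1) ^ v * X 0 ^ d := by
        have hu : u = v + d := by omega
        rw [hu, mul_pow, pow_add]; ring
      rw [heq]
      exact mul_mem (pow_mem htxi v) (t_pow_mem hB hdN)
    · obtain ⟨a, ha⟩ : ∃ a, a = (Om N (d:ℤ)).ncard := ⟨_, rfl⟩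
      have hmem : 2 * ((Om N (-(d:ℤ))).ncard)
          ∈ {m : ℕ | ∃ w : ℕ, w ∉ N ∧ m = 2 * (Om N (-(w : ℤ))).ncard} := ⟨d, hdN, rfl⟩
      have hle : 2 * (a + d) ≤ u + v := by
        have := le_trans (le_csSup hbdd hmem) huv
        rwa [om_card_identity hB d, ← ha] at this
      have hva : a ≤ v := by omega
      obtain ⟨k, rfl⟩ : ∃ k, v = k + a := ⟨v - a, by omega⟩
      have hu' : u = k + (a + d) := by omega
      have heq : (X 0 : MvPolynomial (Fin 2) K) ^ u * X 1 ^ (k + a)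
          = (X 0 * X 1) ^ k * (X 0 ^ (a + d) * X 1 ^ a) := by
        rw [hu']; ring
      rw [heq]
      exact mul_mem (pow_mem htxi k) (ha ▸ gap_gen_mem' hB d)

omit hB in
lemma monomial_eq_prod (w : Fin 2 →₀ ℕ) :
    (MvPolynomial.monomial w (1:K)) = X 0 ^ (w 0) * X 1 ^ (w 1) := by
  have hw : w = Finsupp.single 0 (w 0) + Finsupp.single 1 (w 1) := by
    ext i
    fin_cases i <;> simp [Finsupp.single_apply]
  rw [X_pow_eq_monomial, X_pow_eq_monomial, monomial_mul, one_mul, ← hw]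

lemma fd_part (hfin : {m : ℕ | m ∉ N}.Finite) :
    FiniteDimensional K
      (MvPolynomial (Fin 2) K ⧸ Subalgebra.toSubmodule (grR K N)) := by
  classical
  set ℓ := sSup {m : ℕ | ∃ w : ℕ, w ∉ N ∧ m = 2 * (Om N (-(w : ℤ))).ncard} with hℓ
  set π := (Subalgebra.toSubmodule (grR K N)).mkQ with hπ
  set T := π '' ((fun uv : ℕ × ℕ => (X 0 : MvPolynomial (Fin 2) K) ^ uv.1 * X 1 ^ uv.2)
      '' ↑(Finset.range ℓ ×ˢ Finset.range ℓ)) with hT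
  have hTfin : T.Finite :=
    Set.Finite.image _ (Set.Finite.image _ (Finset.finite_toSet _))
  have hspan : Submodule.span K T = ⊤ := by
    rw [Submodule.eq_top_iff']
    intro x
    obtain ⟨p, rfl⟩ := Submodule.mkQ_surjective _ x
    rw [MvPolynomial.as_sum p, map_sum]
    apply Submodule.sum_mem
    intro w hw
    have hmono : (monomial w (coeff w p) : MvPolynomial (Fin 2) K)
        = (coeff w p) • (monomial w (1:K)) := by
      rw [smul_monomial, smul_eq_mul, mul_one]
    rw [hmono, map_smul]
    apply Submodule.smul_mem
    rw [monomial_eq_prod]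
    by_cases hdeg : ℓ ≤ w 0 + w 1
    · have hR : (X 0 : MvPolynomial (Fin 2) K) ^ (w 0) * X 1 ^ (w 1) ∈ grR K N :=
        monomial_mem hB hfin _ _ hdeg
      have h0 : π ((X 0 : MvPolynomial (Fin 2) K) ^ (w 0) * X 1 ^ (w 1)) = 0 := by
        rw [hπ, Submodule.mkQ_apply, Submodule.Quotient.mk_eq_zero]
        exact hR
      rw [h0]
      exact Submodule.zero_mem _
    · apply Submodule.subset_span
      refine ⟨_, ⟨(w 0, w 1), ?_, rfl⟩, rfl⟩
      simp only [Finset.coe_product, Set.mem_prod, Finset.mem_coe, Finset.mem_range]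
      omega
  have : Module.Finite K
      (MvPolynomial (Fin 2) K ⧸ Subalgebra.toSubmodule (grR K N)) :=
    Module.finite_def.mpr ⟨hTfin.toFinset, by rw [Set.Finite.coe_toFinset]; exact hspan⟩
  exact this


end Alg

/-- `R` has finite codimension in `K[t,ξ]`: the quotient `K`-vector
space `K[t,ξ]/R` is finite dimensional; in particular, with
`ℓ := sup {2·#Ω(−w) : w ∈ ℕ \ N}` (`ℓ = 0` when `N = ℕ`), every monomial `t^u ξ^v`
with `u + v ≥ ℓ` lies in `R`. -/
theorem grR_finite_codimension (K : Type) [Field K] [IsAlgClosed K] [CharZero K]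
    (N : AddSubmonoid ℕ) (hfin : {m : ℕ | m ∉ N}.Finite) :
    FiniteDimensional K
      (MvPolynomial (Fin 2) K ⧸ Subalgebra.toSubmodule (grR K N)) ∧
    ∀ u v : ℕ,
      sSup {m : ℕ | ∃ w : ℕ, w ∉ N ∧ m = 2 * (Om N (-(w : ℤ))).ncard} ≤ u + v →
        MvPolynomial.X 0 ^ u * MvPolynomial.X 1 ^ v ∈ grR K N := by
  classical
  have hB : ∀ m, hfin.toFinset.sup id + 1 ≤ m → m ∈ N := by
    intro m hm
    by_contra h
    have hmem : m ∈ hfin.toFinset := hfin.mem_toFinset.mpr h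
    have := Finset.le_sup (f := id) hmem
    simp only [id] at this
    omega
  exact ⟨fd_part hB hfin, fun u v huv => monomial_mem hB hfin u v huv⟩
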